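/- Quasi-shuffle identity: fix d ≥ 1 and let V be the free ℝ-vector space on the set of all words over letters in ℕ^d (vectors with at least one nonzero entry), including the empty word. There exists an ℝ-bilinear, commutative product ⋆ : V × V → V such that for every T, every d-dimensional real time series x of length T, all 0 ≤ s ≤ t ≤ T, and all φ, ψ ∈ V, one has ⟨φ, ISS_{s,t}(x)⟩ · ⟨ψ, ISS_{s,t}(x)⟩ = ⟨φ ⋆ ψ, ISS_{s,t}(x)⟩, where the ISS pairing is extended ℝ-linearly from words to V and the empty word pairs to 1. -/

import Mathlib

/-- A letter: a vector in `ℕ^d` with at least one nonzero entry. -/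
def Letter (d : ℕ) : Type := {a : Fin d → ℕ // ∃ j, a j ≠ 0}

/-- The free ℝ-vector space on the set of all words over letters in `ℕ^d`
(including the empty word). -/
def WordSpace (d : ℕ) : Type := List (Letter d) →₀ ℝ

noncomputable instance (d : ℕ) : AddCommGroup (WordSpace d) :=
  inferInstanceAs (AddCommGroup (List (Letter d) →₀ ℝ))

noncomputable instance (d : ℕ) : Module ℝ (WordSpace d) :=
  inferInstanceAs (Module ℝ (List (Letter d) →₀ ℝ))

/-- The monomial `x_t^{[a]} = ∏_j (x_t^{(j)})^{a_j}`. -/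
def mono {d : ℕ} (x : ℕ → Fin d → ℝ) (t : ℕ) (a : Fin d → ℕ) : ℝ :=
  ∏ j, (x t j) ^ (a j)

/-- The iterated-sums signature coefficient
`⟨[a_1]⋯[a_p], ISS_{s,t}(x)⟩ = ∑_{s < t_1 < ⋯ < t_p ≤ t} x_{t_1}^{[a_1]} ⋯ x_{t_p}^{[a_p]}`,
equal to `1` for the empty word. -/
def iss {d : ℕ} (x : ℕ → Fin d → ℝ) : List (Fin d → ℕ) → ℕ → ℕ → ℝ
  | [], _, _ => 1
  | a :: w, s, t => ∑ i ∈ Finset.Ioc s t, mono x i a * iss x w i t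

/-- The ISS pairing, extended ℝ-linearly from words to the free vector space on words
(the empty word pairs to `1`). -/
noncomputable def pairing {d : ℕ} (φ : WordSpace d) (x : ℕ → Fin d → ℝ)
    (s t : ℕ) : ℝ :=
  Finsupp.sum φ fun w c => c * iss x (w.map Subtype.val) s t

namespace QS

variable {d : ℕ}

/-- Sum of two letters. -/
def ladd (a b : Letter d) : Letter d :=
  ⟨fun j => a.1 j + b.1 j, by obtain ⟨j, hj⟩ := a.2; exact ⟨j, by simp [hj]⟩⟩

lemma ladd_comm (a b : Letter d) : ladd a b = ladd b a := by
  apply Subtype.ext; funext j; exact Nat.add_comm _ _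

/-- Prepend a letter, linearly. -/
noncomputable def consL (a : Letter d) : WordSpace d →ₗ[ℝ] WordSpace d :=
  Finsupp.lmapDomain ℝ ℝ (List.cons a)

/-- Quasi-shuffle of two words. -/
noncomputable def qsh : List (Letter d) → List (Letter d) → WordSpace d
  | [], v => Finsupp.single v 1
  | a :: u, [] => Finsupp.single (a :: u) 1
  | a :: u, b :: v =>
      consL a (qsh u (b :: v)) + consL b (qsh (a :: u) v) + consL (ladd a b) (qsh u v)
  termination_by u v => u.length + v.length

lemma qsh_nil_left (v : List (Letter d)) : qsh [] v = Finsupp.single v 1 := by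
  rw [qsh]

lemma qsh_nil_right (u : List (Letter d)) : qsh u [] = Finsupp.single u 1 := by
  cases u <;> rw [qsh]

lemma qsh_comm_aux (n : ℕ) : ∀ u v : List (Letter d), u.length + v.length ≤ n →
    qsh u v = qsh v u := by
  induction n with
  | zero =>
    intro u v h
    have hu : u = [] := by cases u <;> simp_all
    have hv : v = [] := by cases v <;> simp_all
    subst hu; subst hv; rfl
  | succ n ih =>
    intro u v h
    match u, v with
    | [], v => rw [qsh_nil_left, qsh_nil_right]
    | a :: u, [] => rw [qsh_nil_left, qsh_nil_right]
    | a :: u, b :: v =>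
      rw [qsh, qsh]
      simp only [List.length_cons] at h
      rw [ih u (b :: v) (by simp; omega), ih (a :: u) v (by simp; omega),
        ih u v (by omega), ladd_comm]
      abel

lemma qsh_comm (u v : List (Letter d)) : qsh u v = qsh v u :=
  qsh_comm_aux (u.length + v.length) u v le_rfl

/-- iss of a word of letters. -/
def issL (x : ℕ → Fin d → ℝ) (w : List (Letter d)) (s t : ℕ) : ℝ :=
  iss x (w.map Subtype.val) s t

lemma issL_nil (x : ℕ → Fin d → ℝ) (s t : ℕ) : issL x [] s t = 1 := rfl

lemma issL_cons (x : ℕ → Fin d → ℝ) (a : Letter d) (w : List (Letter d)) (s t : ℕ) :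
    issL x (a :: w) s t = ∑ i ∈ Finset.Ioc s t, mono x i a.1 * issL x w i t := rfl

lemma mono_mul (x : ℕ → Fin d → ℝ) (i : ℕ) (a b : Fin d → ℕ) :
    mono x i a * mono x i b = mono x i (fun j => a j + b j) := by
  simp [mono, ← Finset.prod_mul_distrib, pow_add]

lemma pairing_single (x : ℕ → Fin d → ℝ) (w : List (Letter d)) (c : ℝ) (s t : ℕ) :
    pairing (Finsupp.single w c) x s t = c * issL x w s t :=
  Finsupp.sum_single_index (by simp)

lemma pairing_add (x : ℕ → Fin d → ℝ) (φ ψ : WordSpace d) (s t : ℕ) :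
    pairing (φ + ψ) x s t = pairing φ x s t + pairing ψ x s t :=
  Finsupp.sum_add_index' (by simp) (by intros; ring)

lemma pairing_smul (x : ℕ → Fin d → ℝ) (c : ℝ) (φ : WordSpace d) (s t : ℕ) :
    pairing (c • φ) x s t = c * pairing φ x s t := by
  unfold pairing
  erw [Finsupp.sum_smul_index (by simp), Finsupp.mul_sum]
  exact Finsupp.sum_congr fun w _ => by ring

lemma pairing_zero (x : ℕ → Fin d → ℝ) (s t : ℕ) :
    pairing (0 : WordSpace d) x s t = 0 := by
  exact Finsupp.sum_zero_index

lemma pairing_consL (x : ℕ → Fin d → ℝ) (a : Letter d) (φ : List (Letter d) →₀ ℝ) (s t : ℕ) :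
    pairing (consL a φ) x s t
      = ∑ i ∈ Finset.Ioc s t, mono x i a.1 * pairing φ x i t := by
  unfold pairing consL
  erw [Finsupp.lmapDomain_apply]
  rw [Finsupp.sum_mapDomain_index (by simp) (by intros; ring)]
  unfold Finsupp.sum
  simp only [List.map_cons]
  have h : ∀ w ∈ φ.support, φ w * iss x (a.1 :: w.map Subtype.val) s t
      = ∑ i ∈ Finset.Ioc s t,
          mono x i a.1 * (φ w * iss x (w.map Subtype.val) i t) := by
    intro w _
    rw [iss, Finset.mul_sum]
    exact Finset.sum_congr rfl fun i _ => by ring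
  refine (Finset.sum_congr rfl h).trans ?_
  rw [Finset.sum_comm]
  exact Finset.sum_congr rfl fun i _ => by rw [Finset.mul_sum]

lemma sum_mul_sum_Ioc (f g : ℕ → ℝ) (s t : ℕ) :
    (∑ i ∈ Finset.Ioc s t, f i) * (∑ j ∈ Finset.Ioc s t, g j)
      = (∑ i ∈ Finset.Ioc s t, f i * ∑ j ∈ Finset.Ioc i t, g j)
      + (∑ j ∈ Finset.Ioc s t, (∑ i ∈ Finset.Ioc j t, f i) * g j)
      + ∑ i ∈ Finset.Ioc s t, f i * g i := by
  rw [Finset.sum_mul_sum]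
  have split : ∀ i ∈ Finset.Ioc s t,
      ∑ j ∈ Finset.Ioc s t, f i * g j
        = (∑ j ∈ Finset.Ioc s i, f i * g j) + ∑ j ∈ Finset.Ioc i t, f i * g j := by
    intro i hi
    simp only [Finset.mem_Ioc] at hi
    rw [Finset.sum_Ioc_consecutive _ (le_of_lt hi.1) hi.2]
  rw [Finset.sum_congr rfl split, Finset.sum_add_distrib]
  have swap : (∑ i ∈ Finset.Ioc s t, ∑ j ∈ Finset.Ioc s i, f i * g j)
      = ∑ j ∈ Finset.Ioc s t, ∑ i ∈ Finset.Icc j t, f i * g j := by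
    apply Finset.sum_comm'
    intro i j
    simp only [Finset.mem_Ioc, Finset.mem_Icc]
    omega
  rw [swap]
  have icc : ∀ j ∈ Finset.Ioc s t,
      ∑ i ∈ Finset.Icc j t, f i * g j = f j * g j + ∑ i ∈ Finset.Ioc j t, f i * g j := by
    intro j hj
    simp only [Finset.mem_Ioc] at hj
    rw [Finset.Icc_eq_cons_Ioc hj.2, Finset.sum_cons]
  rw [Finset.sum_congr rfl icc, Finset.sum_add_distrib]
  simp only [← Finset.mul_sum, ← Finset.sum_mul]
  ring

lemma key (x : ℕ → Fin d → ℝ) : ∀ (n : ℕ) (u v : List (Letter d)),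
    u.length + v.length ≤ n → ∀ s t : ℕ,
    pairing (qsh u v) x s t = issL x u s t * issL x v s t := by
  intro n
  induction n with
  | zero =>
    intro u v h s t
    have hu : u = [] := by cases u <;> simp_all
    have hv : v = [] := by cases v <;> simp_all
    subst hu; subst hv
    rw [qsh_nil_left, pairing_single, issL_nil]
  | succ n ih =>
    intro u v h s t
    match u, v with
    | [], v => rw [qsh_nil_left, pairing_single, issL_nil]
    | a :: u, [] => rw [qsh_nil_right, pairing_single, issL_nil]; ring
    | a :: u, b :: v =>
      simp only [List.length_cons] at h
      rw [qsh, pairing_add, pairing_add]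
      erw [pairing_consL, pairing_consL, pairing_consL]
      rw [issL_cons x a u, issL_cons x b v, sum_mul_sum_Ioc]
      congr 1
      · congr 1
        · refine Finset.sum_congr rfl fun i hi => ?_
          rw [ih u (b :: v) (by simp only [List.length_cons]; omega) i t, ← issL_cons]
          ring
        · refine Finset.sum_congr rfl fun j hj => ?_
          rw [ih (a :: u) v (by simp only [List.length_cons]; omega) j t, ← issL_cons]
          ring
      · refine Finset.sum_congr rfl fun i hi => ?_
        rw [ih u v (by omega) i t]
        simp only [ladd]
        rw [← mono_mul x i a.1 b.1]
        ring

noncomputable def inner1 (u : List (Letter d)) : WordSpace d →ₗ[ℝ] WordSpace d :=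
  Finsupp.lsum ℝ fun v => LinearMap.toSpanSingleton ℝ (WordSpace d) (qsh u v)

noncomputable def starMap : WordSpace d →ₗ[ℝ] WordSpace d →ₗ[ℝ] WordSpace d :=
  Finsupp.lsum ℝ fun u =>
    LinearMap.toSpanSingleton ℝ (WordSpace d →ₗ[ℝ] WordSpace d) (inner1 u)

lemma starMap_single_single (u v : List (Letter d)) (c c' : ℝ) :
    starMap (Finsupp.single u c) (Finsupp.single v c') = (c * c') • qsh u v := by
  unfold starMap inner1
  erw [Finsupp.lsum_single, LinearMap.toSpanSingleton_apply, LinearMap.smul_apply (M := List (Letter d) →₀ ℝ),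
    Finsupp.lsum_single, LinearMap.toSpanSingleton_apply, smul_smul]

lemma starMap_comm (φ ψ : WordSpace d) : starMap φ ψ = starMap ψ φ := by
  induction φ using Finsupp.induction_linear with
  | zero => erw [map_zero, map_zero, LinearMap.zero_apply]
  | add f g hf hg => erw [map_add, LinearMap.add_apply, hf, hg, map_add]
  | single u c =>
    induction ψ using Finsupp.induction_linear with
    | zero => erw [map_zero, map_zero, LinearMap.zero_apply]
    | add f g hf hg => erw [map_add, hf, hg, map_add, LinearMap.add_apply]
    | single v c' =>
      rw [starMap_single_single, starMap_single_single, qsh_comm, mul_comm]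

end QS

/-- Quasi-shuffle identity: for `d ≥ 1` there is an ℝ-bilinear, commutative product `⋆`
on the free vector space on words such that
`⟨φ, ISS_{s,t}(x)⟩ · ⟨ψ, ISS_{s,t}(x)⟩ = ⟨φ ⋆ ψ, ISS_{s,t}(x)⟩`
for all time series `x` of any length `T`, all `0 ≤ s ≤ t ≤ T`, and all `φ, ψ`. -/
theorem exists_quasi_shuffle_product (d : ℕ) (hd : 1 ≤ d) :
    ∃ star : WordSpace d →ₗ[ℝ] WordSpace d →ₗ[ℝ] WordSpace d,
      (∀ φ ψ : WordSpace d, star φ ψ = star ψ φ) ∧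
      ∀ (T : ℕ) (x : ℕ → Fin d → ℝ) (s t : ℕ), s ≤ t → t ≤ T →
        ∀ φ ψ : WordSpace d,
          pairing φ x s t * pairing ψ x s t = pairing (star φ ψ) x s t := by
  refine ⟨QS.starMap, QS.starMap_comm, ?_⟩
  intro T x s t hst htT φ ψ
  induction φ using Finsupp.induction_linear with
  | zero =>
    erw [map_zero, LinearMap.zero_apply, QS.pairing_zero, zero_mul]
  | add f g hf hg =>
    erw [QS.pairing_add, add_mul, hf, hg, map_add, LinearMap.add_apply, QS.pairing_add]
  | single u c =>
    induction ψ using Finsupp.induction_linear with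
    | zero =>
      erw [map_zero, QS.pairing_zero, mul_zero]
    | add f g hf hg =>
      erw [QS.pairing_add, mul_add, hf, hg, map_add, QS.pairing_add]
    | single v c' =>
      rw [QS.pairing_single, QS.pairing_single, QS.starMap_single_single, QS.pairing_smul,
        QS.key x (u.length + v.length) u v le_rfl]
      ring
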